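/- Let α and β be LTL-equivalent temporal formulas (⟨T,T⟩,k⊨α ⇔ ⟨T,T⟩,k⊨β for every trace T and every k<|T|), and let γ be the theory {β → ☐(a ∨ ¬a) : a∈𝒜}. Then for every trace T the following are equivalent: (1) there exists a trace H with H<T such that ⟨H,T⟩,0 ⊭ α→β; (2) T is a temporal stable model of {β}∪γ but T is not a temporal stable model of {α}∪γ. -/

import Mathlib

inductive Formula (A : Type) : Type
  | atom (a : A)
  | falsum
  | verum
  | conj (φ ψ : Formula A)
  | disj (φ ψ : Formula A)
  | impl (φ ψ : Formula A)
  | prev (φ : Formula A)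
  | since (φ ψ : Formula A)
  | trigger (φ ψ : Formula A)
  | next (φ : Formula A)
  | untl (φ ψ : Formula A)
  | release (φ ψ : Formula A)
  | whil (φ ψ : Formula A)

/-- THT satisfaction: `satAux l T H k φ` is `⟨H,T⟩,k ⊨ φ` on traces of length `l`. -/
def satAux {A : Type} (l : ℕ∞) (T : ℕ → Set A) : (ℕ → Set A) → ℕ → Formula A → Prop
  | H, k, .atom a => a ∈ H k
  | _, _, .falsum => False
  | _, _, .verum => True
  | H, k, .conj φ ψ => satAux l T H k φ ∧ satAux l T H k ψ
  | H, k, .disj φ ψ => satAux l T H k φ ∨ satAux l T H k ψ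
  | H, k, .impl φ ψ =>
      (satAux l T H k φ → satAux l T H k ψ) ∧ (satAux l T T k φ → satAux l T T k ψ)
  | H, k, .prev φ => 0 < k ∧ satAux l T H (k - 1) φ
  | H, k, .since φ ψ =>
      ∃ j, j ≤ k ∧ satAux l T H j ψ ∧ ∀ i, j < i → i ≤ k → satAux l T H i φ
  | H, k, .trigger φ ψ =>
      ∀ j, j ≤ k → satAux l T H j ψ ∨ ∃ i, j < i ∧ i ≤ k ∧ satAux l T H i φ
  | H, k, .next φ => ((k + 1 : ℕ) : ℕ∞) < l ∧ satAux l T H (k + 1) φ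
  | H, k, .untl φ ψ =>
      ∃ j, k ≤ j ∧ (j : ℕ∞) < l ∧ satAux l T H j ψ ∧ ∀ i, k ≤ i → i < j → satAux l T H i φ
  | H, k, .release φ ψ =>
      ∀ j, k ≤ j → (j : ℕ∞) < l → satAux l T H j ψ ∨ ∃ i, k ≤ i ∧ i < j ∧ satAux l T H i φ
  | H, k, .whil φ ψ =>
      (∀ j, k ≤ j → (j : ℕ∞) < l →
          satAux l T H j φ ∨ ∃ i, k ≤ i ∧ i < j ∧ ¬ satAux l T H i ψ)
        ∧
      (∀ j, k ≤ j → (j : ℕ∞) < l →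
          satAux l T T j φ ∨ ∃ i, k ≤ i ∧ i < j ∧ ¬ satAux l T T i ψ)

/-- `Sat l H T k φ` : the HT-trace `⟨H,T⟩` of length `l` satisfies `φ` at time `k`. -/
def Sat {A : Type} (l : ℕ∞) (H T : ℕ → Set A) (k : ℕ) (φ : Formula A) : Prop :=
  satAux l T H k φ

/-- `⟨H,T⟩` is an HT-trace of length `l`. -/
def IsHT {A : Type} (l : ℕ∞) (H T : ℕ → Set A) : Prop :=
  ∀ i : ℕ, (i : ℕ∞) < l → H i ⊆ T i

def TraceLe {A : Type} (l : ℕ∞) (H T : ℕ → Set A) : Prop :=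
  ∀ i : ℕ, (i : ℕ∞) < l → H i ⊆ T i

def TraceEq {A : Type} (l : ℕ∞) (H T : ℕ → Set A) : Prop :=
  ∀ i : ℕ, (i : ℕ∞) < l → H i = T i

def TraceLt {A : Type} (l : ℕ∞) (H T : ℕ → Set A) : Prop :=
  TraceLe l H T ∧ ¬ TraceEq l H T

def Formula.neg {A : Type} (φ : Formula A) : Formula A := .impl φ .falsum
def Formula.always {A : Type} (φ : Formula A) : Formula A := .release .falsum φ
def Formula.ev {A : Type} (φ : Formula A) : Formula A := .untl .verum φ
def Formula.final {A : Type} : Formula A := Formula.neg (.next .verum)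
def Formula.wnext {A : Type} (φ : Formula A) : Formula A := .disj (.next φ) .final
def Formula.initial {A : Type} : Formula A := Formula.neg (.prev .verum)
def Formula.wprev {A : Type} (φ : Formula A) : Formula A := .disj (.prev φ) .initial
def Formula.evP {A : Type} (φ : Formula A) : Formula A := .since .verum φ
def Formula.alwP {A : Type} (φ : Formula A) : Formula A := .trigger .falsum φ

/-- THT-equivalence of two formulas. -/
def ThtEquiv {A : Type} (φ ψ : Formula A) : Prop :=
  ∀ (l : ℕ∞) (H T : ℕ → Set A), IsHT l H T →
    ∀ k : ℕ, (k : ℕ∞) < l → (Sat l H T k φ ↔ Sat l H T k ψ)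

/-- `⟨H,T⟩` is a model of the theory `Γ`. -/
def IsModel {A : Type} (l : ℕ∞) (H T : ℕ → Set A) (Γ : Set (Formula A)) : Prop :=
  (0 : ℕ∞) < l ∧ ∀ φ ∈ Γ, Sat l H T 0 φ

/-- `T` (of length `l`) is a temporal stable model of `Γ`. -/
def IsTS {A : Type} (l : ℕ∞) (T : ℕ → Set A) (Γ : Set (Formula A)) : Prop :=
  IsModel l T T Γ ∧ ∀ H : ℕ → Set A, TraceLt l H T → ¬ IsModel l H T Γ

/-- Lemma 1: for LTL-equivalent `α`, `β` and the context theory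
`γ = {β → ☐(a ∨ ¬a) : a ∈ 𝒜}`, a trace `T` admits some `H < T` with
`⟨H,T⟩,0 ⊭ α → β` iff `T` is a temporal stable model of `{β} ∪ γ`
but not of `{α} ∪ γ`. -/

lemma persistence {A : Type} (l : ℕ∞) (H T : ℕ → Set A) (hHT : IsHT l H T) :
    ∀ (φ : Formula A) (k : ℕ), (k : ℕ∞) < l → satAux l T H k φ → satAux l T T k φ := by
  intro φ
  induction φ with
  | atom a => intro k hk h; exact hHT k hk h
  | falsum => intro k _ h; exact h
  | verum => intro k _ _; trivial
  | conj φ ψ ihφ ihψ => intro k hk h; exact ⟨ihφ k hk h.1, ihψ k hk h.2⟩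
  | disj φ ψ ihφ ihψ =>
      intro k hk h
      exact h.elim (fun h => Or.inl (ihφ k hk h)) (fun h => Or.inr (ihψ k hk h))
  | impl φ ψ _ _ => intro k hk h; exact ⟨h.2, h.2⟩
  | prev φ ih =>
      intro k hk h
      exact ⟨h.1, ih (k-1) (lt_of_le_of_lt (by exact_mod_cast Nat.sub_le k 1) hk) h.2⟩
  | since φ ψ ihφ ihψ =>
      intro k hk h
      obtain ⟨j, hj, hψ, hφ⟩ := h
      exact ⟨j, hj, ihψ j (lt_of_le_of_lt (by exact_mod_cast hj) hk) hψ,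
        fun i hi1 hi2 => ihφ i (lt_of_le_of_lt (by exact_mod_cast hi2) hk) (hφ i hi1 hi2)⟩
  | trigger φ ψ ihφ ihψ =>
      intro k hk h j hj
      rcases h j hj with hψ | ⟨i, hi1, hi2, hφ⟩
      · exact Or.inl (ihψ j (lt_of_le_of_lt (by exact_mod_cast hj) hk) hψ)
      · exact Or.inr ⟨i, hi1, hi2, ihφ i (lt_of_le_of_lt (by exact_mod_cast hi2) hk) hφ⟩
  | next φ ih => intro k hk h; exact ⟨h.1, ih (k+1) h.1 h.2⟩
  | untl φ ψ ihφ ihψ =>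
      intro k hk h
      obtain ⟨j, hj, hjl, hψ, hφ⟩ := h
      exact ⟨j, hj, hjl, ihψ j hjl hψ,
        fun i hi1 hi2 => ihφ i (lt_trans (by exact_mod_cast hi2) hjl) (hφ i hi1 hi2)⟩
  | release φ ψ ihφ ihψ =>
      intro k hk h j hj hjl
      rcases h j hj hjl with hψ | ⟨i, hi1, hi2, hφ⟩
      · exact Or.inl (ihψ j hjl hψ)
      · exact Or.inr ⟨i, hi1, hi2, ihφ i (lt_trans (by exact_mod_cast hi2) hjl) hφ⟩
  | whil φ ψ _ _ => intro k hk h; exact ⟨h.2, h.2⟩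

/-- the excluded-middle formula holds on total traces -/
lemma sat_always_em {A : Type} (l : ℕ∞) (T : ℕ → Set A) (a : A) (k : ℕ) :
    satAux l T T k (Formula.always (.disj (.atom a) (Formula.neg (.atom a)))) := by
  intro j _ _
  by_cases h : a ∈ T j
  · exact Or.inl (Or.inl h)
  · exact Or.inl (Or.inr ⟨fun ha => h ha, fun ha => h ha⟩)

/-- satisfying all EM axioms forces H = T -/
lemma gamma_eq {A : Type} (l : ℕ∞) (H T : ℕ → Set A) (hle : TraceLe l H T)
    (hem : ∀ a : A, satAux l T H 0 (Formula.always (.disj (.atom a) (Formula.neg (.atom a))))) :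
    TraceEq l H T := by
  intro i hi
  apply Set.Subset.antisymm (hle i hi)
  intro a ha
  rcases hem a i (Nat.zero_le i) hi with h | h
  · rcases h with h | h
    · exact h
    · exact absurd ha h.2
  · exact absurd h.choose_spec.2.2 (fun x => x)

lemma tracelt_pos {A : Type} {l : ℕ∞} {H T : ℕ → Set A} (h : TraceLt l H T) :
    (0 : ℕ∞) < l := by
  by_contra h0
  push_neg at h0
  have hl : l = 0 := le_antisymm h0 zero_le
  exact h.2 (fun i hi => absurd hi (by simp [hl]))

theorem lemma_one {A : Type} (α β : Formula A)
    (hLTL : ∀ (l : ℕ∞) (T : ℕ → Set A) (k : ℕ), (k : ℕ∞) < l →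
      (Sat l T T k α ↔ Sat l T T k β))
    (γ : Set (Formula A))
    (hγ : γ = Set.range fun a : A =>
      Formula.impl β (Formula.always (.disj (.atom a) (Formula.neg (.atom a)))))
    (l : ℕ∞) (T : ℕ → Set A) :
    (∃ H : ℕ → Set A, TraceLt l H T ∧ ¬ Sat l H T 0 (.impl α β)) ↔
      (IsTS l T ({β} ∪ γ) ∧ ¬ IsTS l T ({α} ∪ γ)) := by
  constructor
  · rintro ⟨H, hlt, hnsat⟩
    have h0 : (0 : ℕ∞) < l := tracelt_pos hlt
    have hiff := hLTL l T 0 h0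
    have h1 : ¬ (Sat l H T 0 α → Sat l H T 0 β) := by
      intro h
      exact hnsat ⟨h, fun ha => hiff.mp ha⟩
    rw [Classical.not_imp] at h1
    obtain ⟨hSα, hnSβ⟩ := h1
    have hTα : Sat l T T 0 α := persistence l H T hlt.1 α 0 h0 hSα
    have hTβ : Sat l T T 0 β := hiff.mp hTα
    refine ⟨⟨⟨h0, ?_⟩, ?_⟩, ?_⟩
    · rintro φ (rfl | hφ)
      · exact hTβ
      · rw [hγ] at hφ
        obtain ⟨a, rfl⟩ := hφ
        exact ⟨fun _ => sat_always_em l T a 0, fun _ => sat_always_em l T a 0⟩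
    · intro H' hlt' hmod
      have hS'β : Sat l H' T 0 β := hmod.2 β (Or.inl rfl)
      have hem : ∀ a : A, satAux l T H' 0
          (Formula.always (.disj (.atom a) (Formula.neg (.atom a)))) := by
        intro a
        have := hmod.2 (Formula.impl β
          (Formula.always (.disj (.atom a) (Formula.neg (.atom a)))))
          (Or.inr (by rw [hγ]; exact ⟨a, rfl⟩))
        exact this.1 hS'β
      exact hlt'.2 (gamma_eq l H' T hlt'.1 hem)
    · rintro ⟨_, hmin⟩
      refine hmin H hlt ⟨h0, ?_⟩
      rintro φ (rfl | hφ)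
      · exact hSα
      · rw [hγ] at hφ
        obtain ⟨a, rfl⟩ := hφ
        exact ⟨fun hb => absurd hb hnSβ, fun _ => sat_always_em l T a 0⟩
  · rintro ⟨hTSβ, hnTSα⟩
    have h0 : (0 : ℕ∞) < l := hTSβ.1.1
    have hiff := hLTL l T 0 h0
    have hTβ : Sat l T T 0 β := hTSβ.1.2 β (Or.inl rfl)
    have hTα : Sat l T T 0 α := hiff.mpr hTβ
    have hmodT : IsModel l T T ({α} ∪ γ) := by
      refine ⟨h0, ?_⟩
      rintro φ (rfl | hφ)
      · exact hTα
      · rw [hγ] at hφ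
        obtain ⟨a, rfl⟩ := hφ
        exact ⟨fun _ => sat_always_em l T a 0, fun _ => sat_always_em l T a 0⟩
    have hnmin : ¬ ∀ H : ℕ → Set A, TraceLt l H T → ¬ IsModel l H T ({α} ∪ γ) :=
      fun h => hnTSα ⟨hmodT, h⟩
    push_neg at hnmin
    obtain ⟨H, hlt, hmod⟩ := hnmin
    have hSα : Sat l H T 0 α := hmod.2 α (Or.inl rfl)
    have hnSβ : ¬ Sat l H T 0 β := by
      intro hb
      have hem : ∀ a : A, satAux l T H 0
          (Formula.always (.disj (.atom a) (Formula.neg (.atom a)))) := by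
        intro a
        have := hmod.2 (Formula.impl β
          (Formula.always (.disj (.atom a) (Formula.neg (.atom a)))))
          (Or.inr (by rw [hγ]; exact ⟨a, rfl⟩))
        exact this.1 hb
      exact hlt.2 (gamma_eq l H T hlt.1 hem)
    exact ⟨H, hlt, fun hs => hnSβ (hs.1 hSα)⟩
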